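/- Let π be a rigid 321-avoiding permutation of size k and τ a 321-avoiding permutation of size n. If there exists an embedding of π into τ, then there exists a minimum embedding e_min of π into τ, i.e., an embedding such that for every embedding e of π into τ and every position x of π, e_min(x) ≤ e(x) as positions. -/

import Mathlib

/-- `f` is an embedding of the permutation `π` (of size `k`) into the permutation `τ`
(of size `n`): a strictly increasing map on positions that preserves the relative
order of values. -/
def IsEmbedding {k n : ℕ} (π : Equiv.Perm (Fin k)) (τ : Equiv.Perm (Fin n))
    (f : Fin k → Fin n) : Prop :=
  StrictMono f ∧ ∀ i j : Fin k, π i < π j ↔ τ (f i) < τ (f j)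

/-- The permutation `τ` avoids the pattern `321`. -/
def Avoids321 {n : ℕ} (τ : Equiv.Perm (Fin n)) : Prop :=
  ¬ ∃ i j k : Fin n, i < j ∧ j < k ∧ τ k < τ j ∧ τ j < τ i

/-- Position `i` is an upper element of `τ`: it participates as the `2` in a copy of `21`. -/
def UpperElt {n : ℕ} (τ : Equiv.Perm (Fin n)) (i : Fin n) : Prop :=
  ∃ j : Fin n, i < j ∧ τ j < τ i

/-- Position `i` is a lower element of `τ`: it participates as the `1` in a copy of `21`. -/
def LowerElt {n : ℕ} (τ : Equiv.Perm (Fin n)) (i : Fin n) : Prop :=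
  ∃ j : Fin n, j < i ∧ τ i < τ j

/-- Position `i` is a fluid element of `τ`: neither upper nor lower. -/
def FluidElt {n : ℕ} (τ : Equiv.Perm (Fin n)) (i : Fin n) : Prop :=
  ¬ UpperElt τ i ∧ ¬ LowerElt τ i

/-- A permutation is rigid if every position is an upper or a lower element. -/
def Rigid {n : ℕ} (τ : Equiv.Perm (Fin n)) : Prop :=
  ∀ i : Fin n, UpperElt τ i ∨ LowerElt τ i

/-- `f : π → τ` is a rigid mapping: it sends upper elements to upper elements and
lower elements to lower elements. -/
def RigidMapping {k n : ℕ} (π : Equiv.Perm (Fin k)) (τ : Equiv.Perm (Fin n))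
    (f : Fin k → Fin n) : Prop :=
  (∀ x : Fin k, UpperElt π x → UpperElt τ (f x)) ∧
  (∀ x : Fin k, LowerElt π x → LowerElt τ (f x))

/-- `q` is the leftmost position strictly to the right of `p` satisfying `P`
(this is `p^→_T` when `P` is "being a type-`T` element"). -/
def IsNextRight {n : ℕ} (P : Fin n → Prop) (p q : Fin n) : Prop :=
  P q ∧ p < q ∧ ∀ r : Fin n, P r → p < r → q ≤ r

/-- `q` is the position with least value among positions satisfying `P` whose value
exceeds that of `p` (this is `p^↑_T` when `P` is "being a type-`T` element"). -/
def IsNextAbove {n : ℕ} (τ : Equiv.Perm (Fin n)) (P : Fin n → Prop) (p q : Fin n) : Prop :=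
  P q ∧ τ p < τ q ∧ ∀ r : Fin n, P r → τ p < τ r → τ q ≤ τ r

lemma mixed_key {k n : ℕ} {π : Equiv.Perm (Fin k)} {τ : Equiv.Perm (Fin n)}
    (hπr : Rigid π) (hτ : Avoids321 τ) {e f : Fin k → Fin n}
    (he : IsEmbedding π τ e) (hf : IsEmbedding π τ f) {x y : Fin k}
    (hxy : π x < π y) (h1 : e x ≤ f x) (h2 : f y ≤ e y) : τ (e x) < τ (f y) := by
  by_contra hc
  push_neg at hc
  have hxny : x ≠ y := fun hxx => absurd (hxx ▸ hxy) (lt_irrefl _)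
  rcases lt_or_gt_of_ne hxny with hlt | hgt
  · have hexfy : e x < f y := lt_of_le_of_lt h1 (hf.1 hlt)
    have hne : τ (f y) ≠ τ (e x) := fun hq => (ne_of_lt hexfy) (τ.injective hq).symm
    have hcy : τ (f y) < τ (e x) := lt_of_le_of_ne hc hne
    have hfx : τ (f x) < τ (e x) := lt_trans ((hf.2 x y).mp hxy) hcy
    have hexfx : e x < f x :=
      lt_of_le_of_ne h1 (fun hq => absurd (hq ▸ hfx) (lt_irrefl _))
    rcases hπr x with ⟨u, hxu, hu⟩ | ⟨l, hlx, hl⟩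
    · exact hτ ⟨e x, f x, f u, hexfx, hf.1 hxu, (hf.2 u x).mp hu, hfx⟩
    · exact hτ ⟨e l, e x, f y, he.1 hlx, hexfy, hcy, (he.2 x l).mp hl⟩
  · have hexey : τ (e x) < τ (e y) := (he.2 x y).mp hxy
    have hfxex : τ (f x) < τ (e x) := lt_of_lt_of_le ((hf.2 x y).mp hxy) hc
    have hexfx : e x < f x :=
      lt_of_le_of_ne h1 (fun hq => absurd (hq ▸ hfxex) (lt_irrefl _))
    exact hτ ⟨e y, e x, f x, he.1 hgt, hexfx, hfxex, hexey⟩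

lemma min_embedding {k n : ℕ} {π : Equiv.Perm (Fin k)} {τ : Equiv.Perm (Fin n)}
    (hπr : Rigid π) (hτ : Avoids321 τ) {e f : Fin k → Fin n}
    (he : IsEmbedding π τ e) (hf : IsEmbedding π τ f) :
    IsEmbedding π τ (fun x => min (e x) (f x)) := by
  have fwd : ∀ a b : Fin k, π a < π b →
      τ (min (e a) (f a)) < τ (min (e b) (f b)) := by
    intro a b hab
    rcases le_total (e a) (f a) with h1 | h1 <;>
      rcases le_total (f b) (e b) with h2 | h2
    · rw [min_eq_left h1, min_eq_right h2]
      exact mixed_key hπr hτ he hf hab h1 h2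
    · rw [min_eq_left h1, min_eq_left h2]
      exact (he.2 a b).mp hab
    · rw [min_eq_right h1, min_eq_right h2]
      exact (hf.2 a b).mp hab
    · rw [min_eq_right h1, min_eq_left h2]
      exact mixed_key hπr hτ hf he hab h1 h2
  constructor
  · intro a b hab
    exact lt_min ((min_le_left (e a) (f a)).trans_lt (he.1 hab))
      ((min_le_right (e a) (f a)).trans_lt (hf.1 hab))
  · intro a b
    refine ⟨fwd a b, ?_⟩
    intro hτab
    rcases eq_or_ne a b with rfl | hne
    · exact absurd hτab (lt_irrefl _)
    · rcases lt_or_gt_of_ne (fun hq : π a = π b => hne (π.injective hq)) with h | h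
      · exact h
      · exact absurd (fwd b a h) (lt_asymm hτab)

/-- if a rigid 321-avoiding pattern `π` embeds into a 321-avoiding text `τ`,
then there is a minimum embedding of `π` into `τ`. -/
theorem statement6 {k n : ℕ} (π : Equiv.Perm (Fin k)) (τ : Equiv.Perm (Fin n))
    (hπ : Avoids321 π) (hπr : Rigid π) (hτ : Avoids321 τ)
    (h : ∃ e : Fin k → Fin n, IsEmbedding π τ e) :
    ∃ emin : Fin k → Fin n, IsEmbedding π τ emin ∧
      ∀ e : Fin k → Fin n, IsEmbedding π τ e → ∀ x : Fin k, emin x ≤ e x := by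
  obtain ⟨m, hm, hmin0⟩ := Set.Finite.exists_minimal
    (Set.toFinite {f : Fin k → Fin n | IsEmbedding π τ f}) h
  have hmin : ∀ a' ∈ {f : Fin k → Fin n | IsEmbedding π τ f}, id a' ≤ id m → id m = id a' :=
    fun a' ha' hle => le_antisymm (hmin0 ha' hle) hle
  refine ⟨m, hm, fun e he x => ?_⟩
  have hg : IsEmbedding π τ (fun x => min (m x) (e x)) := min_embedding hπr hτ hm he
  have hle : (fun x => min (m x) (e x)) ≤ m := fun x => min_le_left _ _
  have := hmin _ hg hle
  have hx : min (m x) (e x) = m x := (congrFun this x).symm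
  calc m x = min (m x) (e x) := hx.symm
    _ ≤ e x := min_le_right _ _
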